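/- Let H be a finite-dimensional Hilbert space, {Λ_i} a g-frame for H with g-frame operator S, and {Γ_i} an alternate dual g-frame of {Λ_i}. Then ∑_i ‖Λ_i − Γ_i‖_F² = ∑_i ‖Λ_i − Λ_i S^{-1}‖_F² + ∑_i ‖Λ_i S^{-1} − Γ_i‖_F². -/

import Mathlib

/-- The Hilbert–Schmidt norm squared `‖T‖_F²` of an operator on a finite-dimensional
Hilbert space. -/
noncomputable def hsNormSq {H K : Type*} [NormedAddCommGroup H] [InnerProductSpace ℂ H]
    [FiniteDimensional ℂ H] [NormedAddCommGroup K] [InnerProductSpace ℂ K]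
    (T : H →L[ℂ] K) : ℝ :=
  ∑ k, ‖T (stdOrthonormalBasis ℂ H k)‖ ^ 2

/-- For a g-frame `{Λ i}` on a finite-dimensional Hilbert space with frame operator
`S` and an alternate dual g-frame `{Γ i}`:
`∑ i ‖Λ i − Γ i‖_F² = ∑ i ‖Λ i − Λ i S⁻¹‖_F² + ∑ i ‖Λ i S⁻¹ − Γ i‖_F²`. -/
theorem gframe_alternate_dual_hs_identity
    {H K : Type*} [NormedAddCommGroup H] [InnerProductSpace ℂ H] [FiniteDimensional ℂ H]
    [NormedAddCommGroup K] [InnerProductSpace ℂ K] [CompleteSpace K]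
    {I : Type*} (Λ Γ : I → (H →L[ℂ] K)) (S Sinv : H →L[ℂ] H)
    (A B C D : ℝ) (hA : 0 < A) (hB : 0 < B) (hC : 0 < C) (hD : 0 < D)
    (hΛsum : ∀ x : H, Summable fun i => ‖Λ i x‖ ^ 2)
    (hΛlow : ∀ x : H, A * ‖x‖ ^ 2 ≤ ∑' i, ‖Λ i x‖ ^ 2)
    (hΛup : ∀ x : H, ∑' i, ‖Λ i x‖ ^ 2 ≤ B * ‖x‖ ^ 2)
    (hΓsum : ∀ x : H, Summable fun i => ‖Γ i x‖ ^ 2)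
    (hΓlow : ∀ x : H, C * ‖x‖ ^ 2 ≤ ∑' i, ‖Γ i x‖ ^ 2)
    (hΓup : ∀ x : H, ∑' i, ‖Γ i x‖ ^ 2 ≤ D * ‖x‖ ^ 2)
    (hS : ∀ x : H, HasSum (fun i => (Λ i).adjoint (Λ i x)) (S x))
    (hSinv₁ : ∀ x : H, S (Sinv x) = x) (hSinv₂ : ∀ x : H, Sinv (S x) = x)
    (hdual : ∀ x : H, HasSum (fun i => (Λ i).adjoint (Γ i x)) x) :
    ∑' i, hsNormSq (Λ i - Γ i)
      = (∑' i, hsNormSq (Λ i - (Λ i) ∘L Sinv)) + ∑' i, hsNormSq ((Λ i) ∘L Sinv - Γ i) := by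
  classical
  set e : Fin (Module.finrank ℂ H) → H := fun k => stdOrthonormalBasis ℂ H k with he
  set a : I → H →L[ℂ] K := fun i => Λ i - (Λ i) ∘L Sinv with ha
  set b : I → H →L[ℂ] K := fun i => (Λ i) ∘L Sinv - Γ i with hb
  have haval : ∀ i (x : H), a i x = Λ i (x - Sinv x) := by
    intro i x; simp [ha, map_sub]
  have hasum : ∀ x : H, Summable fun i => ‖a i x‖ ^ 2 := by
    intro x
    have := hΛsum (x - Sinv x)
    simpa [haval] using this
  have hbsum : ∀ x : H, Summable fun i => ‖b i x‖ ^ 2 := by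
    intro x
    apply Summable.of_nonneg_of_le (fun i => sq_nonneg _) (fun i => ?_)
      (((hΛsum (Sinv x)).mul_left 2).add ((hΓsum x).mul_left 2))
    have h1 : ‖b i x‖ ≤ ‖Λ i (Sinv x)‖ + ‖Γ i x‖ := by
      simpa [hb] using norm_sub_le (Λ i (Sinv x)) (Γ i x)
    nlinarith [norm_nonneg (Λ i (Sinv x)), norm_nonneg (Γ i x), norm_nonneg (b i x),
      sq_nonneg (‖Λ i (Sinv x)‖ - ‖Γ i x‖), mul_self_le_mul_self (norm_nonneg (b i x)) h1]
  have hcsum : ∀ x : H, Summable fun i => (inner ℂ (a i x) (b i x) : ℂ) := by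
    intro x
    apply Summable.of_norm_bounded (((hasum x).add (hbsum x)).mul_left (1/2 : ℝ))
    intro i
    have h1 := norm_inner_le_norm (𝕜 := ℂ) (a i x) (b i x)
    nlinarith [norm_nonneg (a i x), norm_nonneg (b i x), sq_nonneg (‖a i x‖ - ‖b i x‖)]
  have key : ∀ i, hsNormSq (Λ i - Γ i)
      = hsNormSq (a i) + hsNormSq (b i)
        + 2 * (∑ k, (inner ℂ (a i (e k)) (b i (e k)) : ℂ)).re := by
    intro i
    unfold hsNormSq
    rw [Complex.re_sum, Finset.mul_sum, ← Finset.sum_add_distrib, ← Finset.sum_add_distrib]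
    refine Finset.sum_congr rfl fun k _ => ?_
    have hx : (Λ i - Γ i) (e k) = a i (e k) + b i (e k) := by
      simp [ha, hb]
    rw [hx, @norm_add_sq ℂ]
    simp only [RCLike.re_to_complex]
    ring
  have hinnerΛ : ∀ u v : H, HasSum (fun i => (inner ℂ (Λ i u) (Λ i v) : ℂ)) (inner ℂ u (S v)) := by
    intro u v
    have := (hS v).mapL (innerSL ℂ u)
    simpa [ContinuousLinearMap.adjoint_inner_right] using this
  have hinnerΓ : ∀ u x : H, HasSum (fun i => (inner ℂ (Λ i u) (Γ i x) : ℂ)) (inner ℂ u x) := by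
    intro u x
    have := (hdual x).mapL (innerSL ℂ u)
    simpa [ContinuousLinearMap.adjoint_inner_right] using this
  have hcross : ∀ k, HasSum (fun i => (inner ℂ (a i (e k)) (b i (e k)) : ℂ)) 0 := by
    intro k
    have h3 := (hinnerΛ (e k - Sinv (e k)) (Sinv (e k))).sub (hinnerΓ (e k - Sinv (e k)) (e k))
    rw [hSinv₁, sub_self] at h3
    have hfg : (fun i => (inner ℂ (a i (e k)) (b i (e k)) : ℂ))
        = fun i => (inner ℂ (Λ i (e k - Sinv (e k))) (Λ i (Sinv (e k))) : ℂ)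
            - inner ℂ (Λ i (e k - Sinv (e k))) (Γ i (e k)) := by
      funext i
      simp [ha, hb, inner_sub_right, map_sub]
    rw [hfg]
    exact h3
  have hcross0 : HasSum (fun i => ∑ k, (inner ℂ (a i (e k)) (b i (e k)) : ℂ)) 0 := by
    have := hasSum_sum (s := Finset.univ) (fun k _ => hcross k)
    simpa using this
  have hre : HasSum (fun i => (∑ k, (inner ℂ (a i (e k)) (b i (e k)) : ℂ)).re) 0 := by
    simpa using hcross0.mapL Complex.reCLM
  have hAsum : Summable fun i => hsNormSq (a i) := by
    unfold hsNormSq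
    exact summable_sum fun k _ => hasum (e k)
  have hBsum : Summable fun i => hsNormSq (b i) := by
    unfold hsNormSq
    exact summable_sum fun k _ => hbsum (e k)
  calc ∑' i, hsNormSq (Λ i - Γ i)
      = ∑' i, (hsNormSq (a i) + hsNormSq (b i)
          + 2 * (∑ k, (inner ℂ (a i (e k)) (b i (e k)) : ℂ)).re) := tsum_congr key
    _ = (∑' i, (hsNormSq (a i) + hsNormSq (b i)))
          + ∑' i, 2 * (∑ k, (inner ℂ (a i (e k)) (b i (e k)) : ℂ)).re := by
        exact Summable.tsum_add (hAsum.add hBsum) (hre.summable.mul_left 2)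
    _ = (∑' i, hsNormSq (a i)) + ∑' i, hsNormSq (b i) := by
        rw [Summable.tsum_add hAsum hBsum, tsum_mul_left, hre.tsum_eq, mul_zero, add_zero]
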